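/- arXiv:2207.13312 — 2 statements merged into one kernel-verified Lean document; each statement's English description precedes it below -/
import Mathlib

section
/- Let n ≥ 2 and define f : 𝔽₂ⁿ → [-1,1] by f(x) = (1/n) · Σ_{i=1}^n (-1)^{x_i}. Then for every affine subspace 𝒰 = α + 𝒱 of 𝔽₂ⁿ with codim(𝒱) ≤ n/2 − 1 and every subspace 𝒲 with 𝒲 ⊕ 𝒱^⊥ = 𝔽₂ⁿ, there exists a nonzero γ ∈ 𝒲 with |f̂_𝒰(γ)| ≥ 1/n. In particular, for every δ < 1/n, f_𝒰 is not δ-regular on any affine subspace of codimension at most n/2 − 1. -/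
open Finset

abbrev F2 (n : ℕ) := Fin n → ZMod 2

/-- The 𝔽₂ bilinear form ⟨γ,x⟩ = Σᵢ γᵢ xᵢ. -/
def ip {n : ℕ} (γ x : F2 n) : ZMod 2 := ∑ i, γ i * x i

/-- The character χ_γ(x) = (-1)^⟨γ,x⟩. -/
noncomputable def chi {n : ℕ} (γ x : F2 n) : ℝ := (-1 : ℝ) ^ (ip γ x).val

/-- Fourier coefficient f̂(γ) = 2^{-n} Σ_x f(x) (-1)^⟨γ,x⟩. -/
noncomputable def fCoeff {n : ℕ} (f : F2 n → ℝ) (γ : F2 n) : ℝ :=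
  (∑ x : F2 n, f x * chi γ x) / 2 ^ n

/-- f has Fourier degree at most d. -/
def HasFourierDegLE {n : ℕ} (f : F2 n → ℝ) (d : ℕ) : Prop :=
  ∀ γ : F2 n, d < hammingNorm γ → fCoeff f γ = 0

/-- Orthogonal subspace 𝒱^⊥. -/
def perp {n : ℕ} (V : Submodule (ZMod 2) (F2 n)) : Submodule (ZMod 2) (F2 n) where
  carrier := {γ | ∀ v ∈ V, ip γ v = 0}
  zero_mem' := by
    intro v _
    simp [ip]
  add_mem' := by
    intro a b ha hb v hv
    have h : ip (a + b) v = ip a v + ip b v := by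
      simp [ip, add_mul, Finset.sum_add_distrib]
    simp only [Set.mem_setOf_eq] at ha hb ⊢
    rw [h, ha v hv, hb v hv, add_zero]
  smul_mem' := by
    intro c a ha v hv
    have h : ip (c • a) v = c * ip a v := by
      simp [ip, Finset.mul_sum, mul_assoc]
    simp only [Set.mem_setOf_eq] at ha ⊢
    rw [h, ha v hv, mul_zero]

/-- Fourier coefficient of the restriction of f to the affine subspace α + 𝒱,
indexed by γ (from a complement 𝒲 of 𝒱^⊥):
f̂_𝒰(γ) = |𝒱|⁻¹ Σ_{x ∈ 𝒱} f(x+α)(-1)^⟨γ,x⟩. -/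
noncomputable def restrictCoeff {n : ℕ} (f : F2 n → ℝ) (V : Submodule (ZMod 2) (F2 n))
    (α γ : F2 n) : ℝ :=
  (∑ x : F2 n, Set.indicator (V : Set (F2 n)) (fun x => f (x + α) * chi γ x) x) / (Nat.card V)

/-- The restriction of f to α + 𝒱 is δ-regular. -/
def IsDeltaRegular {n : ℕ} (f : F2 n → ℝ) (V : Submodule (ZMod 2) (F2 n)) (α : F2 n)
    (δ : ℝ) : Prop :=
  ∀ W : Submodule (ZMod 2) (F2 n), IsCompl W (perp V) →
    ∀ γ ∈ W, γ ≠ 0 → |restrictCoeff f V α γ| ≤ δ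

/-- span of the standard basis vectors indexed by J. -/
def spanJ {n : ℕ} (J : Finset (Fin n)) : Submodule (ZMod 2) (F2 n) where
  carrier := {x | ∀ i ∉ J, x i = 0}
  zero_mem' := by intro i _; rfl
  add_mem' := by
    intro a b ha hb i hi
    simp only [Set.mem_setOf_eq] at ha hb ⊢
    simp [Pi.add_apply, ha i hi, hb i hi]
  smul_mem' := by
    intro c a ha i hi
    simp only [Set.mem_setOf_eq] at ha ⊢
    simp [Pi.smul_apply, ha i hi]

lemma perp_mem {n : ℕ} (V : Submodule (ZMod 2) (F2 n)) (γ : F2 n) :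
    γ ∈ perp V ↔ ∀ v ∈ V, ip γ v = 0 := Iff.rfl

lemma neg1pow (a b : ZMod 2) : ((-1:ℝ))^((a+b).val) = (-1:ℝ)^a.val * (-1:ℝ)^b.val := by
  have h01 : ∀ a : ZMod 2, a = 0 ∨ a = 1 := by decide
  rcases h01 a with rfl | rfl <;> rcases h01 b with rfl | rfl <;> simp [show ZMod.val (1+1 : ZMod 2) = 0 from rfl, show ZMod.val (1 : ZMod 2) = 1 from rfl, show ZMod.val (0 : ZMod 2) = 0 from rfl]

lemma ip_add_left {n : ℕ} (β γ x : F2 n) : ip (β + γ) x = ip β x + ip γ x := by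
  simp [ip, add_mul, Finset.sum_add_distrib]

lemma ip_add_right {n : ℕ} (β x y : F2 n) : ip β (x + y) = ip β x + ip β y := by
  simp [ip, mul_add, Finset.sum_add_distrib]

lemma chi_add_left {n : ℕ} (β γ x : F2 n) : chi (β + γ) x = chi β x * chi γ x := by
  rw [chi, ip_add_left, neg1pow]; rfl

lemma chi_add_right {n : ℕ} (β x y : F2 n) : chi β (x + y) = chi β x * chi β y := by
  rw [chi, ip_add_right, neg1pow]; rfl

lemma ip_single {n : ℕ} (i : Fin n) (x : F2 n) : ip (Pi.single i 1) x = x i := by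
  simp [ip, Pi.single_apply]

lemma chi_single {n : ℕ} (i : Fin n) (x : F2 n) : chi (Pi.single i 1) x = (-1:ℝ)^((x i).val) := by
  rw [chi, ip_single]

open Classical in
lemma charSum {n : ℕ} (V : Submodule (ZMod 2) (F2 n)) (β : F2 n) :
    ∑ x ∈ univ.filter (· ∈ V), chi β x
      = if β ∈ perp V then ((univ.filter (· ∈ V)).card : ℝ) else 0 := by
  classical
  split_ifs with h
  · have hall : ∀ x ∈ univ.filter (· ∈ V), chi β x = 1 := by
      intro x hx
      simp only [Finset.mem_filter] at hx
      have : ip β x = 0 := h x hx.2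
      simp [chi, this]
    rw [Finset.sum_congr rfl hall, Finset.sum_const, nsmul_eq_mul, mul_one]
  · -- exists v₀ ∈ V with ip β v₀ = 1
    simp only [perp, Submodule.mem_mk, AddSubmonoid.mem_mk, AddSubsemigroup.mem_mk,
      Set.mem_setOf_eq, not_forall] at h
    obtain ⟨v₀, hv₀V, hv₀⟩ := h
    have hone : ip β v₀ = 1 := by
      have h01 : ∀ a : ZMod 2, a ≠ 0 → a = 1 := by decide
      exact h01 _ hv₀
    have hchi : chi β v₀ = -1 := by simp [chi, hone, show ZMod.val (1 : ZMod 2) = 1 from rfl]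
    have hbij : ∑ x ∈ univ.filter (· ∈ V), chi β x
        = ∑ x ∈ univ.filter (· ∈ V), chi β (x + v₀) := by
      apply Finset.sum_nbij' (fun x => x + v₀) (fun x => x + v₀)
      · intro a ha; simp only [Finset.mem_filter, Finset.mem_univ, true_and] at ha ⊢
        exact V.add_mem ha hv₀V
      · intro a ha; simp only [Finset.mem_filter, Finset.mem_univ, true_and] at ha ⊢
        exact V.add_mem ha hv₀V
      · intro a _
        rw [add_assoc, show v₀ + v₀ = 0 from funext fun j => CharTwo.add_self_eq_zero _, add_zero]
      · intro a _
        rw [add_assoc, show v₀ + v₀ = 0 from funext fun j => CharTwo.add_self_eq_zero _, add_zero]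
      · intro a _
        rw [add_assoc, show v₀ + v₀ = 0 from funext fun j => CharTwo.add_self_eq_zero _, add_zero]
    have : ∑ x ∈ univ.filter (· ∈ V), chi β x = -∑ x ∈ univ.filter (· ∈ V), chi β x := by
      nth_rewrite 1 [hbij]
      rw [← Finset.sum_neg_distrib]
      exact Finset.sum_congr rfl fun x _ => by rw [chi_add_right, hchi]; ring
    linarith

open Classical in
lemma restrictCoeff_eq {n : ℕ} (V : Submodule (ZMod 2) (F2 n)) (α γ : F2 n) :
    restrictCoeff (fun x => (1/(n:ℝ)) * ∑ i, (-1:ℝ)^((x i).val)) V α γ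
      = (1/(n:ℝ)) * ∑ i, (if Pi.single i 1 + γ ∈ perp V then ((-1:ℝ))^((α i).val) else 0) := by
  classical
  set c : ℕ := (univ.filter (· ∈ V)).card with hc
  have hcard : (Nat.card V : ℝ) = (c : ℝ) := by
    rw [Nat.card_eq_fintype_card]
    norm_cast
    exact Fintype.card_subtype _
  have hcpos : 0 < c := by
    rw [hc]
    apply Finset.card_pos.2
    exact ⟨0, by simp [V.zero_mem]⟩
  rw [restrictCoeff]
  have hind : (∑ x : F2 n, Set.indicator (V : Set (F2 n))
        (fun x => ((1/(n:ℝ)) * ∑ i, (-1:ℝ)^(((x+α) i).val)) * chi γ x) x)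
      = ∑ x ∈ univ.filter (· ∈ V), ((1/(n:ℝ)) * ∑ i, (-1:ℝ)^(((x+α) i).val)) * chi γ x := by
    rw [Finset.sum_filter]
    exact Finset.sum_congr rfl fun x _ => by
      rw [Set.indicator_apply]
      simp [SetLike.mem_coe]
  rw [hind]
  have hterm : ∀ x : F2 n, ((1/(n:ℝ)) * ∑ i, (-1:ℝ)^(((x+α) i).val)) * chi γ x
      = (1/(n:ℝ)) * ∑ i, ((-1:ℝ)^((α i).val) * chi (Pi.single i 1 + γ) x) := by
    intro x
    rw [mul_assoc, Finset.sum_mul]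
    congr 1
    exact Finset.sum_congr rfl fun i _ => by
      rw [chi_add_left, chi_single, Pi.add_apply, neg1pow]
      ring
  rw [Finset.sum_congr rfl fun x _ => hterm x, ← Finset.mul_sum, Finset.sum_comm]
  have : ∀ i : Fin n, (∑ x ∈ univ.filter (· ∈ V), (-1:ℝ)^((α i).val) * chi (Pi.single i 1 + γ) x)
      = (c : ℝ) * (if Pi.single i 1 + γ ∈ perp V then ((-1:ℝ))^((α i).val) else 0) := by
    intro i
    rw [← Finset.mul_sum, charSum]
    split_ifs <;> ring
  have hc0 : (c:ℝ) ≠ 0 := Nat.cast_ne_zero.2 hcpos.ne'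
  rw [Finset.sum_congr rfl fun i _ => this i, ← Finset.mul_sum, hcard, mul_div_assoc,
    mul_div_cancel_left₀ _ hc0]


noncomputable def B2 (n : ℕ) : LinearMap.BilinForm (ZMod 2) (F2 n) :=
  LinearMap.mk₂ (ZMod 2) ip
    (fun a b x => by simp [ip, add_mul, Finset.sum_add_distrib])
    (fun c a x => by simp [ip, Finset.mul_sum, mul_assoc])
    (fun a x y => by simp [ip, mul_add, Finset.sum_add_distrib])
    (fun c a x => by simp [ip, Finset.mul_sum]; exact Finset.sum_congr rfl fun i _ => by ring)

lemma B2_apply {n : ℕ} (γ x : F2 n) : B2 n γ x = ip γ x := rfl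

lemma ip_comm {n : ℕ} (γ x : F2 n) : ip γ x = ip x γ :=
  Finset.sum_congr rfl fun i _ => mul_comm _ _

lemma B2_nondeg (n : ℕ) : (B2 n).Nondegenerate := by
  constructor <;> intro x hx
  all_goals
    funext i
    have := hx (Pi.single i 1)
    simpa [B2_apply, ip, Pi.single_apply] using this

lemma B2_refl (n : ℕ) : (B2 n).IsRefl := by
  intro x y h
  rw [B2_apply, ip_comm]
  exact h

lemma perp_eq_orthogonal {n : ℕ} (V : Submodule (ZMod 2) (F2 n)) :
    perp V = (B2 n).orthogonal V := by
  ext γ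
  rw [perp_mem, LinearMap.BilinForm.mem_orthogonal_iff]
  constructor
  · intro h v hv
    have := h v hv
    rwa [B2_apply, ip_comm]
  · intro h v hv
    have := h v hv
    rwa [B2_apply, ip_comm] at this

lemma neg1pow_eq (a : ZMod 2) : ((-1:ℝ))^a.val = if a = 0 then 1 else -1 := by
  have h01 : ∀ a : ZMod 2, a = 0 ∨ a = 1 := by decide
  rcases h01 a with rfl | rfl <;> simp [show ZMod.val (1 : ZMod 2) = 1 from rfl]


/-- the degree-one function f(x) = (1/n)Σᵢ(-1)^{xᵢ} has a nontrivial
Fourier coefficient of magnitude ≥ 1/n on every affine subspace of codimension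
at most n/2 − 1; hence it is not δ-regular there for any δ < 1/n. -/
theorem degree_one_lower_bound (n : ℕ) (hn : 2 ≤ n)
    (V : Submodule (ZMod 2) (F2 n)) (α : F2 n)
    (hcodim : ((n - Module.finrank (ZMod 2) V : ℕ) : ℝ) ≤ (n : ℝ) / 2 - 1)
    (W : Submodule (ZMod 2) (F2 n)) (hW : IsCompl W (perp V)) :
    (∃ γ ∈ W, γ ≠ 0 ∧
      (1 : ℝ) / n ≤
        |restrictCoeff (fun x => (1 / (n : ℝ)) * ∑ i, (-1 : ℝ) ^ ((x i).val)) V α γ|) ∧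
    ∀ δ : ℝ, δ < 1 / (n : ℝ) →
      ¬ IsDeltaRegular (fun x => (1 / (n : ℝ)) * ∑ i, (-1 : ℝ) ^ ((x i).val)) V α δ := by
  classical
  have hn0 : (0:ℝ) < n := by positivity
  set K := perp V with hKdef
  set d := Module.finrank (ZMod 2) K with hd
  have hrankF : Module.finrank (ZMod 2) (F2 n) = n := by
    rw [Module.finrank_pi, Fintype.card_fin]
  have hrankK : d = n - Module.finrank (ZMod 2) V := by
    rw [hd, hKdef, perp_eq_orthogonal,
      LinearMap.BilinForm.finrank_orthogonal (B2_nondeg n) V, hrankF]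
  have h2d : 2 * d + 2 ≤ n := by
    rw [← hrankK] at hcodim
    have : 2*(d:ℝ) + 2 ≤ (n:ℝ) := by linarith
    exact_mod_cast this
  have hrankW : Module.finrank (ZMod 2) W = n - d := by
    have := Submodule.finrank_add_eq_of_isCompl hW
    rw [hrankF] at this
    omega
  set pr := Submodule.projectionOnto W K hW with hpr
  set Ψ : F2 n →ₗ[ZMod 2] F2 n := W.subtype.comp pr with hΨ
  set w : Fin n → F2 n := fun i => Ψ (Pi.single i 1) with hw
  have hwW : ∀ i, w i ∈ W := fun i => (pr (Pi.single i 1)).2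
  have hker : ∀ x, Ψ x = 0 ↔ x ∈ K := by
    intro x
    constructor
    · intro h
      have h2 : pr x = 0 := by
        apply Subtype.ext
        exact h
      exact (Submodule.linearProjOfIsCompl_apply_eq_zero_iff hW).1 h2
    · intro h
      show (↑(pr x) : F2 n) = 0
      rw [Submodule.projectionOnto_apply_of_mem_right hW h]
      rfl
  have hΨW : ∀ y ∈ W, Ψ y = y := by
    intro y hy
    exact congrArg Subtype.val (Submodule.linearProjOfIsCompl_apply_left hW ⟨y, hy⟩)
  have hres : ∀ i, Pi.single i 1 - w i ∈ K := by
    intro i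
    rw [← hker, map_sub, hΨW (w i) (hwW i), show Ψ (Pi.single i 1) = w i from rfl, sub_self]
  have hmem : ∀ γ ∈ W, ∀ i : Fin n, (Pi.single i 1 + γ ∈ K ↔ w i = γ) := by
    intro γ hγ i
    constructor
    · intro h
      have h1 : w i + γ ∈ K := by
        have h2 := K.sub_mem h (hres i)
        have h3 : Pi.single i 1 + γ - (Pi.single i 1 - w i) = w i + γ := by abel
        rwa [h3] at h2
      have h2 : w i + γ ∈ W := W.add_mem (hwW i) hγ
      have h3 : w i + γ = 0 := (Submodule.disjoint_def.1 hW.disjoint) _ h2 h1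
      funext j
      have := congrFun h3 j
      simp only [Pi.add_apply, Pi.zero_apply] at this
      have h01 : ∀ a b : ZMod 2, a + b = 0 → a = b := by decide
      exact h01 _ _ this
    · rintro rfl
      have h1 := hres i
      have h2 : Pi.single i 1 - w i = Pi.single i 1 + w i := by
        funext j
        simp [sub_eq_add_neg, CharTwo.neg_eq]
      rwa [h2] at h1
  set fib : F2 n → Finset (Fin n) := fun γ => univ.filter (fun i => w i = γ) with hfib
  set S : F2 n → ℤ := fun γ => ∑ i ∈ fib γ, (if α i = 0 then 1 else -1) with hS
  have hcoeff : ∀ γ ∈ W,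
      restrictCoeff (fun x => (1 / (n : ℝ)) * ∑ i, (-1 : ℝ) ^ ((x i).val)) V α γ
        = (S γ : ℝ) / n := by
    intro γ hγ
    rw [restrictCoeff_eq V α γ]
    have h1 : ∀ i : Fin n,
        (if Pi.single i 1 + γ ∈ perp V then ((-1:ℝ))^((α i).val) else 0)
          = (if w i = γ then (((if α i = 0 then (1:ℤ) else -1) : ℤ) : ℝ) else 0) := by
      intro i
      rw [neg1pow_eq]
      by_cases h : w i = γ
      · rw [if_pos ((hmem γ hγ i).2 h), if_pos h]
        split_ifs <;> norm_num
      · rw [if_neg (fun hc => h ((hmem γ hγ i).1 hc)), if_neg h]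
    rw [Finset.sum_congr rfl fun i _ => h1 i, ← Finset.sum_filter]
    simp only [hS]
    push_cast
    ring
  have key : ∃ γ ∈ W, γ ≠ 0 ∧
      (1 : ℝ) / n ≤
        |restrictCoeff (fun x => (1 / (n : ℝ)) * ∑ i, (-1 : ℝ) ^ ((x i).val)) V α γ| := by
    by_contra hcon
    push_neg at hcon
    have hS0 : ∀ γ ∈ W, γ ≠ 0 → S γ = 0 := by
      intro γ hγ h0
      have h1 := hcon γ hγ h0
      rw [hcoeff γ hγ, abs_div, abs_of_pos hn0] at h1
      have h2 : |(S γ : ℝ)| < 1 := by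
        have := (div_lt_div_iff_of_pos_right hn0).1 h1
        linarith [this]
      have h3 : |S γ| < 1 := by exact_mod_cast h2
      rw [abs_lt] at h3
      omega
    have heven : ∀ γ ∈ W, γ ≠ 0 → 2 ∣ (fib γ).card := by
      intro γ hγ h0
      have h := hS0 γ hγ h0
      have hsplit : S γ = (((fib γ).filter (fun i => α i = 0)).card : ℤ)
          - (((fib γ).filter (fun i => ¬ α i = 0)).card : ℤ) := by
        simp only [hS]
        rw [Finset.sum_ite, Finset.sum_const, Finset.sum_const]
        push_cast
        ring
      have hcard : ((fib γ).filter (fun i => α i = 0)).card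
          + ((fib γ).filter (fun i => ¬ α i = 0)).card = (fib γ).card :=
        Finset.card_filter_add_card_filter_not _
      omega
    set T := Finset.image w univ with hT
    have hspan : W = Submodule.span (ZMod 2) (T : Set (F2 n)) := by
      have h1 : LinearMap.range Ψ = W := by
        rw [hΨ, LinearMap.range_comp, hpr, Submodule.range_projectionOnto hW,
          Submodule.map_top, Submodule.range_subtype]
      have h2 : LinearMap.range Ψ = Submodule.span (ZMod 2) (Set.range w) := by
        rw [← Submodule.map_top, ← (Pi.basisFun (ZMod 2) (Fin n)).span_eq, Submodule.map_span,
          ← Set.range_comp,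
          show ⇑Ψ ∘ ⇑(Pi.basisFun (ZMod 2) (Fin n)) = w from
            funext fun i => congrArg (⇑Ψ) (by simp [Pi.basisFun_apply])]
      rw [← h1, h2]
      congr 1
      rw [hT, Finset.coe_image, Finset.coe_univ, Set.image_univ]
    have hWle : Module.finrank (ZMod 2) W ≤ T.card := by
      rw [hspan]
      exact finrank_span_finset_le_card T
    have hfibsum : ∑ γ ∈ T, (fib γ).card = n := by
      have h := Finset.card_eq_sum_card_fiberwise
        (fun i (_ : i ∈ (univ : Finset (Fin n))) => Finset.mem_image_of_mem w (mem_univ i))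
      rw [Finset.card_univ, Fintype.card_fin] at h
      exact h.symm
    have h2c : 2 * (T.erase 0).card ≤ ∑ γ ∈ T.erase 0, (fib γ).card := by
      have : ∀ γ ∈ T.erase 0, 2 ≤ (fib γ).card := by
        intro γ hγ
        obtain ⟨hγ0, hγT⟩ := Finset.mem_erase.1 hγ
        obtain ⟨i, _, hi⟩ := Finset.mem_image.1 hγT
        have hγW : γ ∈ W := hi ▸ hwW i
        have hdvd := heven γ hγW hγ0
        have hne : 1 ≤ (fib γ).card := Finset.card_pos.2 ⟨i, by simp [hfib, hi]⟩
        omega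
      calc 2 * (T.erase 0).card = ∑ _γ ∈ T.erase 0, 2 := by
            rw [Finset.sum_const, smul_eq_mul, mul_comm]
        _ ≤ ∑ γ ∈ T.erase 0, (fib γ).card := Finset.sum_le_sum this
    by_cases h0T : (0 : F2 n) ∈ T
    · have hsum0 : ∑ γ ∈ T.erase 0, (fib γ).card + (fib 0).card = n := by
        rw [Finset.sum_erase_add _ _ h0T, hfibsum]
      have hf0 : 1 ≤ (fib 0).card := by
        obtain ⟨i, _, hi⟩ := Finset.mem_image.1 h0T
        exact Finset.card_pos.2 ⟨i, by simp [hfib, hi]⟩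
      have hTc : (T.erase 0).card + 1 = T.card := by
        rw [Finset.card_erase_of_mem h0T]
        have : 1 ≤ T.card := Finset.card_pos.2 ⟨0, h0T⟩
        omega
      omega
    · have hsum0 : ∑ γ ∈ T.erase 0, (fib γ).card = n := by
        rw [Finset.erase_eq_of_notMem h0T, hfibsum]
      have hTc : (T.erase 0).card = T.card := by
        rw [Finset.erase_eq_of_notMem h0T]
      omega
  refine ⟨key, fun δ hδ hreg => ?_⟩
  obtain ⟨γ, hγW, hγ0, hγ⟩ := key
  have := hreg W hW γ hγW hγ0
  linarith
end

section
/- Let 𝒱 ⊆ 𝔽₂ⁿ be a linear subspace of codimension C and let 𝒲 be a linear subspace with 𝒲 ⊕ 𝒱^⊥ = 𝔽₂ⁿ. Then for every integer ℓ with 1 ≤ ℓ ≤ C + 1, there exists a set S_ℓ ⊆ 𝒲 with |S_ℓ| ≥ n − C(ℓ+1) such that for every γ ∈ S_ℓ: (1) the coset γ + 𝒱^⊥ contains exactly one vector of Hamming weight 1, and (2) for every integer t with 1 ≤ t ≤ ℓ, the number of vectors of Hamming weight t in γ + 𝒱^⊥ is at most 2 · binom(2C+1, t−1). -/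
open Finset

section AuxLemmas

lemma zmod2_add_self (a : ZMod 2) : a + a = 0 := by revert a; decide

lemma zmod2_eq_one : ∀ a : ZMod 2, a ≠ 0 → a = 1 := by decide

lemma zmod2_eq_of_iff : ∀ a b : ZMod 2, ((a ≠ 0) ↔ (b ≠ 0)) → a = b := by decide

lemma f2_add_self {n : ℕ} (x : F2 n) : x + x = 0 := by
  funext i; exact zmod2_add_self (x i)

lemma f2_add_add {n : ℕ} (a b c : F2 n) : (a + c) + (b + c) = a + b := by
  rw [add_add_add_comm, f2_add_self, add_zero]

lemma f2_cancel {n : ℕ} (a b c : F2 n) : (a + c) + (c + b) = a + b := by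
  rw [add_assoc, ← add_assoc c c b, f2_add_self, zero_add]

lemma hammingNorm_eq_card {n : ℕ} (x : F2 n) :
    hammingNorm x = (Finset.univ.filter (fun i => x i ≠ 0)).card := rfl

lemma hammingNorm_add_le {n : ℕ} (x y : F2 n) :
    hammingNorm (x + y) ≤ hammingNorm x + hammingNorm y := by
  have h := hammingDist_triangle (x + y) y 0
  rwa [hammingDist_zero_right, hammingDist_zero_right, hammingDist_eq_hammingNorm,
    neg_add, neg_add_cancel_right, show -x = x from neg_eq_iff_add_eq_zero.mpr (f2_add_self x)] at h

def sbv {n : ℕ} (i : Fin n) : F2 n := Pi.single i 1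

lemma sbv_apply {n : ℕ} (i k : Fin n) : sbv i k = if k = i then 1 else 0 :=
  Pi.single_apply i 1 k

lemma hammingNorm_sbv {n : ℕ} (i : Fin n) : hammingNorm (sbv i) = 1 := by
  rw [hammingNorm_eq_card]
  have h : (Finset.univ.filter (fun k => sbv i k ≠ 0)) = {i} := by
    ext k
    simp only [Finset.mem_filter, Finset.mem_univ, true_and, Finset.mem_singleton, sbv_apply]
    by_cases h : k = i <;> simp [h]
  rw [h, Finset.card_singleton]

lemma eq_sbv_of {n : ℕ} {β : F2 n} {i : Fin n} (h1 : hammingNorm β = 1) (hi : β i ≠ 0) :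
    β = sbv i := by
  funext k
  rw [sbv_apply]
  by_cases hk : k = i
  · subst hk
    rw [if_pos rfl]
    exact zmod2_eq_one _ hi
  · rw [if_neg hk]
    by_contra hβk
    have hsub : ({i, k} : Finset (Fin n)) ⊆ Finset.univ.filter (fun j => β j ≠ 0) := by
      intro j hj
      rcases Finset.mem_insert.mp hj with rfl | hj'
      · simp [hi]
      · rw [Finset.mem_singleton] at hj'
        subst hj'
        simp [hβk]
    have hcard := Finset.card_le_card hsub
    rw [Finset.card_insert_of_notMem (by simp; exact fun h => hk h.symm : i ∉ ({k} : Finset (Fin n))),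
      Finset.card_singleton] at hcard
    rw [hammingNorm_eq_card] at h1
    omega

lemma hammingNorm_add_sbv {n : ℕ} (v : F2 n) (i : Fin n) (h : v i = 0) :
    hammingNorm (v + sbv i) = hammingNorm v + 1 := by
  rw [hammingNorm_eq_card, hammingNorm_eq_card]
  have hset : Finset.univ.filter (fun k => (v + sbv i) k ≠ 0)
      = insert i (Finset.univ.filter (fun k => v k ≠ 0)) := by
    ext k
    simp only [Finset.mem_filter, Finset.mem_univ, true_and, Finset.mem_insert, Pi.add_apply,
      sbv_apply]
    by_cases hk : k = i
    · subst hk; simp [h]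
    · simp [hk]
  rw [hset, Finset.card_insert_of_notMem (by simp [h])]

end AuxLemmas

section InfoSet

lemma exists_infoSet {n : ℕ} (P : Submodule (ZMod 2) (F2 n)) :
    ∃ I : Finset (Fin n), I.card = Module.finrank (ZMod 2) P ∧
      (∀ i ∈ I, ∃ v ∈ P, v i ≠ 0) ∧
      (∀ v ∈ P, (∀ i ∈ I, v i = 0) → v = 0) := by
  suffices H : ∀ (d : ℕ) (P : Submodule (ZMod 2) (F2 n)), Module.finrank (ZMod 2) P = d →
      ∃ I : Finset (Fin n), I.card = d ∧ (∀ i ∈ I, ∃ v ∈ P, v i ≠ 0) ∧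
        (∀ v ∈ P, (∀ i ∈ I, v i = 0) → v = 0) by
    obtain ⟨I, h1, h2, h3⟩ := H _ P rfl
    exact ⟨I, by rw [h1], h2, h3⟩
  intro d
  induction d with
  | zero =>
    intro P hP
    refine ⟨∅, rfl, by simp, ?_⟩
    have hbot : P = ⊥ := Submodule.finrank_eq_zero.mp hP
    intro v hv _
    rw [hbot, Submodule.mem_bot] at hv
    exact hv
  | succ d ih =>
    intro P hP
    have hPne : P ≠ ⊥ := by
      intro h
      rw [h, finrank_bot] at hP
      exact Nat.succ_ne_zero d hP.symm
    obtain ⟨v₀, hv₀P, hv₀⟩ := (Submodule.ne_bot_iff P).mp hPne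
    obtain ⟨i, hi⟩ := Function.ne_iff.mp hv₀
    rw [Pi.zero_apply] at hi
    set φ : P →ₗ[ZMod 2] ZMod 2 := (LinearMap.proj i).comp P.subtype with hφ
    have hφv₀ : φ ⟨v₀, hv₀P⟩ = v₀ i := rfl
    have hrange : LinearMap.range φ = ⊤ := by
      rw [eq_top_iff]
      intro c _
      have h1 : (1 : ZMod 2) ∈ LinearMap.range φ :=
        ⟨⟨v₀, hv₀P⟩, by rw [hφv₀, zmod2_eq_one _ hi]⟩
      have h2 := Submodule.smul_mem (LinearMap.range φ) c h1
      simpa using h2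
    have hker : Module.finrank (ZMod 2) (LinearMap.ker φ) = d := by
      have h := LinearMap.finrank_range_add_finrank_ker φ
      rw [hrange, finrank_top, Module.finrank_self, hP] at h
      omega
    set P' := (LinearMap.ker φ).map P.subtype with hP'
    have hmem : ∀ v, v ∈ P' ↔ v ∈ P ∧ v i = 0 := by
      intro v
      constructor
      · rintro ⟨⟨w, hwP⟩, hwker, rfl⟩
        exact ⟨hwP, by simpa [hφ] using hwker⟩
      · rintro ⟨hvP, hvi⟩
        exact ⟨⟨v, hvP⟩, by simpa [hφ] using hvi, rfl⟩
    have hP'rank : Module.finrank (ZMod 2) P' = d := by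
      rw [hP', Submodule.finrank_map_subtype_eq]
      exact hker
    obtain ⟨I', hI'card, hI'supp, hI'inj⟩ := ih P' hP'rank
    have hiI' : i ∉ I' := by
      intro hmem'
      obtain ⟨v, hvP', hvi⟩ := hI'supp i hmem'
      exact hvi ((hmem v).mp hvP').2
    refine ⟨insert i I', ?_, ?_, ?_⟩
    · rw [Finset.card_insert_of_notMem hiI', hI'card]
    · intro j hj
      rcases Finset.mem_insert.mp hj with rfl | hj'
      · exact ⟨v₀, hv₀P, hi⟩
      · obtain ⟨v, hvP', hvi⟩ := hI'supp j hj'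
        exact ⟨v, ((hmem v).mp hvP').1, hvi⟩
    · intro v hvP h0
      have hvP' : v ∈ P' := (hmem v).mpr ⟨hvP, h0 i (Finset.mem_insert_self _ _)⟩
      exact hI'inj v hvP' (fun j hj => h0 j (Finset.mem_insert_of_mem hj))

end InfoSet

section Counting

lemma sum_choose_le {c s : ℕ} (hs : s ≤ c) :
    ∑ k ∈ Finset.range (s + 1), c.choose k ≤ (2 * c + 1).choose s := by
  have h2 : 2 * c + 1 = c + (c + 1) := by ring
  rw [h2, Nat.add_choose_eq, Finset.Nat.sum_antidiagonal_eq_sum_range_succ_mk]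
  apply Finset.sum_le_sum
  intro k hk
  have hk' : k ≤ s := Nat.lt_succ_iff.mp (Finset.mem_range.mp hk)
  have hpos : 0 < (c + 1).choose (s - k) := Nat.choose_pos (by omega)
  exact Nat.le_mul_of_pos_right _ hpos

lemma count_weight {n : ℕ} (P : Submodule (ZMod 2) (F2 n)) {c s : ℕ}
    (hd : Module.finrank (ZMod 2) P ≤ c) (hs : s ≤ c) :
    Nat.card {v : F2 n // v ∈ P ∧ hammingNorm v = s} ≤ (2 * c + 1).choose s := by
  classical
  obtain ⟨I, hIcard, -, hIinj⟩ := exists_infoSet P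
  set F : Finset (Finset (Fin n)) := I.powerset.filter (fun J => J.card ≤ s) with hF
  have hmemF : ∀ v : F2 n, v ∈ P → hammingNorm v = s →
      I.filter (fun k => v k ≠ 0) ∈ F := by
    intro v hvP hvs
    rw [hF, Finset.mem_filter, Finset.mem_powerset]
    refine ⟨Finset.filter_subset _ _, ?_⟩
    calc (I.filter (fun k => v k ≠ 0)).card
        ≤ (Finset.univ.filter (fun k => v k ≠ 0)).card :=
          Finset.card_le_card (Finset.filter_subset_filter _ (Finset.subset_univ I))
      _ = s := by rw [← hammingNorm_eq_card, hvs]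
  have hinj : Function.Injective
      (fun v : {v : F2 n // v ∈ P ∧ hammingNorm v = s} =>
        (⟨I.filter (fun k => v.1 k ≠ 0), hmemF v.1 v.2.1 v.2.2⟩ : {J // J ∈ F})) := by
    intro v w h
    simp only [Subtype.mk.injEq] at h
    apply Subtype.ext
    have hvw : ∀ k ∈ I, v.1 k = w.1 k := by
      intro k hk
      have := Finset.ext_iff.mp h k
      simp only [Finset.mem_filter, hk, true_and] at this
      exact zmod2_eq_of_iff _ _ this
    have hadd : v.1 + w.1 ∈ P := Submodule.add_mem P v.2.1 w.2.1
    have hzero : v.1 + w.1 = 0 := hIinj _ hadd (fun k hk => by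
      rw [Pi.add_apply, hvw k hk, zmod2_add_self])
    funext k
    have := congrFun hzero k
    rw [Pi.add_apply] at this
    have h2 := congrArg (· + w.1 k) this
    simpa [add_assoc, zmod2_add_self] using h2
  have key := Nat.card_le_card_of_injective _ hinj
  have hFcard : F.card ≤ ∑ k ∈ Finset.range (s + 1), I.card.choose k := by
    have hsub : F ⊆ (Finset.range (s + 1)).biUnion (fun k => Finset.powersetCard k I) := by
      intro J hJ
      rw [hF, Finset.mem_filter, Finset.mem_powerset] at hJ
      exact Finset.mem_biUnion.mpr
        ⟨J.card, Finset.mem_range.mpr (by omega), Finset.mem_powersetCard.mpr ⟨hJ.1, rfl⟩⟩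
    calc F.card ≤ _ := Finset.card_le_card hsub
      _ ≤ ∑ k ∈ Finset.range (s + 1), (Finset.powersetCard k I).card := Finset.card_biUnion_le
      _ = ∑ k ∈ Finset.range (s + 1), I.card.choose k := by
          simp [Finset.card_powersetCard]
  calc Nat.card {v : F2 n // v ∈ P ∧ hammingNorm v = s}
      ≤ Nat.card {J // J ∈ F} := key
    _ = F.card := Nat.card_eq_finsetCard F
    _ ≤ ∑ k ∈ Finset.range (s + 1), I.card.choose k := hFcard
    _ ≤ ∑ k ∈ Finset.range (s + 1), c.choose k :=
        Finset.sum_le_sum (fun k _ => Nat.choose_le_choose k (by omega))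
    _ ≤ (2 * c + 1).choose s := sum_choose_le hs

end Counting

section Perp

lemma mem_perp {n : ℕ} {V : Submodule (ZMod 2) (F2 n)} {γ : F2 n} :
    γ ∈ perp V ↔ ∀ v ∈ V, ip γ v = 0 := Iff.rfl

noncomputable def ipLin {n : ℕ} (γ : F2 n) : F2 n →ₗ[ZMod 2] ZMod 2 where
  toFun x := ip γ x
  map_add' x y := by simp [ip, mul_add, Finset.sum_add_distrib]
  map_smul' c x := by simp [ip, Finset.mul_sum, mul_left_comm]

noncomputable def psi {n : ℕ} (V : Submodule (ZMod 2) (F2 n)) :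
    F2 n →ₗ[ZMod 2] Module.Dual (ZMod 2) V where
  toFun γ := (ipLin γ).comp V.subtype
  map_add' a b := by
    ext v
    simp [ipLin, ip, add_mul, Finset.sum_add_distrib]
  map_smul' c a := by
    ext v
    simp [ipLin, ip, Finset.mul_sum, mul_assoc]

lemma ker_psi {n : ℕ} (V : Submodule (ZMod 2) (F2 n)) : LinearMap.ker (psi V) = perp V := by
  ext γ
  rw [LinearMap.mem_ker, mem_perp]
  constructor
  · intro h v hv
    have h2 := LinearMap.congr_fun h ⟨v, hv⟩
    exact h2
  · intro h
    ext v
    exact h v v.2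

lemma psi_surjective {n : ℕ} (V : Submodule (ZMod 2) (F2 n)) :
    Function.Surjective (psi V) := by
  intro φ
  obtain ⟨V', hV'⟩ := Submodule.exists_isCompl V
  set φ' : F2 n →ₗ[ZMod 2] ZMod 2 := φ.comp (V.projectionOnto V' hV') with hφ'
  refine ⟨fun i => φ' (Pi.single i 1), ?_⟩
  ext v
  show ip (fun i => φ' (Pi.single i 1)) (v : F2 n) = φ v
  have hsum : (v : F2 n) = ∑ i, Pi.single i ((v : F2 n) i) := (Finset.univ_sum_single _).symm
  have hv : φ' (v : F2 n) = φ v := by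
    rw [hφ']
    simp [Submodule.projectionOnto_apply_left hV' v]
  rw [← hv]
  conv_rhs => rw [hsum]
  rw [map_sum]
  apply Finset.sum_congr rfl
  intro i _
  have hsingle : Pi.single i ((v : F2 n) i) = ((v : F2 n) i • Pi.single i (1 : ZMod 2) : F2 n) := by
    funext k
    by_cases hk : k = i
    · subst hk; simp
    · simp [Pi.single_eq_of_ne hk]
  rw [hsingle, map_smul, smul_eq_mul, mul_comm]

lemma finrank_perp {n : ℕ} (V : Submodule (ZMod 2) (F2 n)) :
    Module.finrank (ZMod 2) (perp V) + Module.finrank (ZMod 2) V = n := by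
  have h := LinearMap.finrank_range_add_finrank_ker (psi V)
  rw [ker_psi, LinearMap.range_eq_top.mpr (psi_surjective V), finrank_top,
    Subspace.dual_finrank_eq] at h
  have hfn : Module.finrank (ZMod 2) (F2 n) = n := Module.finrank_fin_fun (ZMod 2)
  omega

end Perp

lemma mem_spanJ {n : ℕ} {J : Finset (Fin n)} {x : F2 n} :
    x ∈ spanJ J ↔ ∀ i ∉ J, x i = 0 := Iff.rfl

/-- many cosets of 𝒱^⊥ contain exactly one weight-one vector and few
vectors of each higher weight t ≤ ℓ. -/
theorem low_weight_vecs_in_cosets (n C : ℕ) (V : Submodule (ZMod 2) (F2 n))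
    (hC : n - Module.finrank (ZMod 2) V = C)
    (W : Submodule (ZMod 2) (F2 n)) (hW : IsCompl W (perp V))
    (ℓ : ℕ) (hℓ1 : 1 ≤ ℓ) (hℓ2 : ℓ ≤ C + 1) :
    ∃ S : Finset (F2 n), ↑S ⊆ (W : Set (F2 n)) ∧ n - C * (ℓ + 1) ≤ S.card ∧
      ∀ γ ∈ S,
        Nat.card {β : F2 n // hammingNorm β = 1 ∧ β + γ ∈ perp V} = 1 ∧
        ∀ t : ℕ, 1 ≤ t → t ≤ ℓ →
          Nat.card {β : F2 n // hammingNorm β = t ∧ β + γ ∈ perp V} ≤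
            2 * (2 * C + 1).choose (t - 1) := by
  classical
  have hVle : Module.finrank (ZMod 2) V ≤ n := by
    have h := Submodule.finrank_le V
    rwa [Module.finrank_fin_fun] at h
  have hPrank : Module.finrank (ZMod 2) (perp V) ≤ C := by
    have h := finrank_perp V
    omega
  -- Bad coordinate set
  obtain ⟨b, hbT, hbspan, hbind⟩ := exists_linearIndependent (ZMod 2)
    {v : F2 n | v ∈ perp V ∧ hammingNorm v ≤ ℓ + 1}
  have hbfin : b.Finite := hbind.setFinite
  have hbcard : hbfin.toFinset.card ≤ C := by
    haveI := hbfin.fintype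
    have h1 : Module.finrank (ZMod 2) (Submodule.span (ZMod 2) b) = b.toFinset.card :=
      finrank_span_set_eq_card hbind
    have h2 : hbfin.toFinset = b.toFinset := hbfin.toFinset_eq_toFinset
    have h3 : Submodule.span (ZMod 2) b ≤ perp V := by
      apply Submodule.span_le.mpr
      intro v hv
      exact (hbT hv).1
    have h4 := Submodule.finrank_mono h3
    rw [h2]
    omega
  set B : Finset (Fin n) := hbfin.toFinset.biUnion
    (fun v => Finset.univ.filter (fun i => v i ≠ 0)) with hB
  have hBcard : B.card ≤ C * (ℓ + 1) := by
    calc B.card ≤ ∑ v ∈ hbfin.toFinset, (Finset.univ.filter (fun i => v i ≠ 0)).card :=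
          Finset.card_biUnion_le
      _ ≤ ∑ _v ∈ hbfin.toFinset, (ℓ + 1) := by
          apply Finset.sum_le_sum
          intro v hv
          have hvT := hbT (hbfin.mem_toFinset.mp hv)
          rw [← hammingNorm_eq_card]
          exact hvT.2
      _ = hbfin.toFinset.card * (ℓ + 1) := by rw [Finset.sum_const, smul_eq_mul]
      _ ≤ C * (ℓ + 1) := Nat.mul_le_mul_right _ hbcard
  have hkey : ∀ v ∈ perp V, hammingNorm v ≤ ℓ + 1 → ∀ i, v i ≠ 0 → i ∈ B := by
    intro v hvP hvw i hvi
    have hvspan : v ∈ Submodule.span (ZMod 2) b := by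
      rw [hbspan]
      exact Submodule.subset_span ⟨hvP, hvw⟩
    have hsub : Submodule.span (ZMod 2) b ≤ spanJ B := by
      apply Submodule.span_le.mpr
      intro w hw
      rw [SetLike.mem_coe, mem_spanJ]
      intro j hj
      by_contra hwj
      exact hj (Finset.mem_biUnion.mpr ⟨w, hbfin.mem_toFinset.mpr hw,
        Finset.mem_filter.mpr ⟨Finset.mem_univ _, hwj⟩⟩)
    have hv2 := mem_spanJ.mp (hsub hvspan)
    by_contra hiB
    exact hvi (hv2 i hiB)
  -- projection onto W along perp V
  set prW := Submodule.projectionOnto W (perp V) hW with hprW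
  have hproj : ∀ x : F2 n, x + (prW x : F2 n) ∈ perp V := by
    intro x
    have h0 : prW (x + (prW x : F2 n)) = 0 := by
      rw [map_add, Submodule.projectionOnto_apply_left hW (prW x)]
      have h2 : ((2 : ZMod 2)) • prW x = prW x + prW x := two_smul _ _
      rw [← h2, show (2 : ZMod 2) = 0 by decide, zero_smul]
    exact (Submodule.projectionOnto_apply_eq_zero_iff hW).mp h0
  set G : Finset (Fin n) := Finset.univ \ B with hG
  have hGinj : Set.InjOn (fun i => (prW (sbv i) : F2 n)) G := by
    intro i hi j hj hij
    by_contra hne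
    simp only at hij
    have h2' : sbv j + (prW (sbv i) : F2 n) ∈ perp V := by
      rw [hij]; exact hproj (sbv j)
    have hsum : sbv i + sbv j ∈ perp V := by
      have h := Submodule.add_mem (perp V) (hproj (sbv i)) h2'
      rwa [f2_add_add] at h
    have hwt : hammingNorm (sbv i + sbv j) ≤ ℓ + 1 := by
      have h := hammingNorm_add_le (sbv i) (sbv j)
      rw [hammingNorm_sbv, hammingNorm_sbv] at h
      omega
    have hvi : (sbv i + sbv j) i ≠ 0 := by
      rw [Pi.add_apply, sbv_apply, sbv_apply, if_pos rfl, if_neg (fun h => hne h)]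
      decide
    have hiB : i ∈ B := hkey _ hsum hwt i hvi
    rw [Finset.mem_coe, hG, Finset.mem_sdiff] at hi
    exact hi.2 hiB
  refine ⟨G.image (fun i => (prW (sbv i) : F2 n)), ?_, ?_, ?_⟩
  · intro γ hγ
    simp only [Finset.coe_image, Set.mem_image, Finset.mem_coe] at hγ
    obtain ⟨i, _, rfl⟩ := hγ
    exact (prW (sbv i)).2
  · rw [Finset.card_image_of_injOn hGinj, hG,
      Finset.card_sdiff_of_subset (Finset.subset_univ B), Finset.card_univ, Fintype.card_fin]
    exact Nat.sub_le_sub_left hBcard n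
  · intro γ hγ
    obtain ⟨i, hiG, rfl⟩ := Finset.mem_image.mp hγ
    have hiB : i ∉ B := by
      rw [hG, Finset.mem_sdiff] at hiG
      exact hiG.2
    set γ := (prW (sbv i) : F2 n) with hγdef
    have heiP : sbv i + γ ∈ perp V := hproj (sbv i)
    have hconv : ∀ β : F2 n, β + γ ∈ perp V → β + sbv i ∈ perp V := by
      intro β hβ
      have h := Submodule.add_mem (perp V) hβ heiP
      rwa [f2_add_add] at h
    have hconv2 : ∀ β : F2 n, β + sbv i ∈ perp V → β + γ ∈ perp V := by
      intro β hβ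
      have h := Submodule.add_mem (perp V) hβ heiP
      rwa [f2_cancel] at h
    have uniq : ∀ β : F2 n, hammingNorm β = 1 → β + γ ∈ perp V → β = sbv i := by
      intro β hβ1 hβP
      have hv : β + sbv i ∈ perp V := hconv β hβP
      by_cases hβi : β i = 0
      · exfalso
        have hne0 : (β + sbv i) i ≠ 0 := by
          rw [Pi.add_apply, hβi, sbv_apply, if_pos rfl, zero_add]
          decide
        have hwt : hammingNorm (β + sbv i) ≤ ℓ + 1 := by
          have h := hammingNorm_add_le β (sbv i)
          rw [hβ1, hammingNorm_sbv] at h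
          omega
        exact hiB (hkey _ hv hwt i hne0)
      · exact eq_sbv_of hβ1 hβi
    constructor
    · rw [Nat.card_eq_one_iff_unique]
      constructor
      · constructor
        intro β₁ β₂
        apply Subtype.ext
        rw [uniq β₁.1 β₁.2.1 β₁.2.2, uniq β₂.1 β₂.2.1 β₂.2.2]
      · exact ⟨⟨sbv i, hammingNorm_sbv i, heiP⟩⟩
    · intro t ht1 ht2
      have hmap : ∀ β : F2 n, hammingNorm β = t → β + γ ∈ perp V →
          (β + sbv i) ∈ perp V ∧ hammingNorm (β + sbv i) = t - 1 := by
        intro β hβt hβP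
        have hv : β + sbv i ∈ perp V := hconv β hβP
        have hvi : (β + sbv i) i = 0 := by
          by_contra hne0
          apply hiB
          apply hkey _ hv ?_ i hne0
          have h := hammingNorm_add_le β (sbv i)
          rw [hβt, hammingNorm_sbv] at h
          omega
        refine ⟨hv, ?_⟩
        have hβeq : (β + sbv i) + sbv i = β := by
          rw [add_assoc, f2_add_self, add_zero]
        have h := hammingNorm_add_sbv (β + sbv i) i hvi
        rw [hβeq, hβt] at h
        omega
      have hstep : Nat.card {β : F2 n // hammingNorm β = t ∧ β + γ ∈ perp V}
          ≤ Nat.card {v : F2 n // v ∈ perp V ∧ hammingNorm v = t - 1} := by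
        apply Nat.card_le_card_of_injective
          (fun β : {β : F2 n // hammingNorm β = t ∧ β + γ ∈ perp V} =>
            (⟨β.1 + sbv i, (hmap β.1 β.2.1 β.2.2).1, (hmap β.1 β.2.1 β.2.2).2⟩ :
              {v : F2 n // v ∈ perp V ∧ hammingNorm v = t - 1}))
        intro β₁ β₂ h
        simp only [Subtype.mk.injEq] at h
        apply Subtype.ext
        have h2 := congrArg (· + sbv i) h
        simpa [add_assoc, f2_add_self] using h2
      calc Nat.card {β : F2 n // hammingNorm β = t ∧ β + γ ∈ perp V}
          ≤ Nat.card {v : F2 n // v ∈ perp V ∧ hammingNorm v = t - 1} := hstep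
        _ ≤ (2 * C + 1).choose (t - 1) := count_weight (perp V) hPrank (by omega)
        _ ≤ 2 * (2 * C + 1).choose (t - 1) := by omega
end
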